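/- There exist constants c₁ > 0 and d₀ > 0 depending only on δ and p such that the following holds. In the standing setup (see context) with d ≥ d₀, one has h_P(ν_P(a)) ≤ c₁ d^{−1/(1−p)} and h_P(ν_P(b)) ≤ c₁ d^{−1/(1−p)}. -/

import Mathlib

open MeasureTheory Set
open scoped RealInnerProductSpace ENNReal NNReal Classical

set_option maxHeartbeats 1000000
noncomputable section

abbrev E (n : ℕ) : Type := EuclideanSpace ℝ (Fin n)

/-- The support function of a set. -/
def suppFn {n : ℕ} (K : Set (E n)) (u : E n) : ℝ :=
  sSup ((fun x => ⟪x, u⟫) '' K)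

/-- `u` is an exterior unit normal of `K` at `x`. -/
def IsOuterNormalAt {n : ℕ} (K : Set (E n)) (u x : E n) : Prop :=
  ‖u‖ = 1 ∧ ∀ y ∈ K, ⟪y, u⟫ ≤ ⟪x, u⟫

/-- A choice of Gauss map (exterior unit normal) for `K`. -/
def gaussMap {n : ℕ} (K : Set (E n)) (x : E n) : E n :=
  if h : ∃ u, IsOuterNormalAt K u x then h.choose else 0

/-- The surface area measure of a compact convex set, extended to the degenerate case:
if `K` has nonempty interior it is `S_K(ω) = ℋ^{n-1}(ν_K^{-1}(ω))`; if `K` lies in a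
hyperplane orthogonal to a unit vector `v` it is `ℋ^{n-1}(K)⋅(δ_v + δ_{-v})` (which is `0`
when `dim K ≤ n-2`). -/
def surfMeasure {n : ℕ} (K : Set (E n)) : Measure (E n) :=
  if (interior K).Nonempty then
    Measure.map (gaussMap K) ((μH[(n : ℝ) - 1]).restrict (frontier K))
  else if h : ∃ v : E n, ‖v‖ = 1 ∧ ∀ x ∈ K, ∀ y ∈ K, ⟪x - y, v⟫ = 0 then
    (μH[(n : ℝ) - 1] K) • (Measure.dirac h.choose + Measure.dirac (-h.choose))
  else 0

/-- The `L_p` surface area measure `dS_{K,p} = h_K^{1-p} dS_K`. -/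
def lpSurfMeasure {n : ℕ} (p : ℝ) (K : Set (E n)) : Measure (E n) :=
  (surfMeasure K).withDensity (fun u => ENNReal.ofReal (suppFn K u ^ (1 - p)))

/-- A convex body: a compact convex set with nonempty interior. -/
def IsConvexBody {n : ℕ} (K : Set (E n)) : Prop :=
  Convex ℝ K ∧ IsCompact K ∧ (interior K).Nonempty

/-- The support of a Borel measure. -/
def msupport {n : ℕ} (μ : Measure (E n)) : Set (E n) :=
  {x | ∀ U : Set (E n), IsOpen U → x ∈ U → 0 < μ U}

/-- The unit sphere `S^{n-1}` in `ℝⁿ`. -/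
def unitSphere (n : ℕ) : Set (E n) := Metric.sphere 0 1

/-- The spherical cap `Ω(v,t) = {u ∈ S^{n-1} : ⟨u,v⟩ > t}`. -/
def hemi {n : ℕ} (v : E n) (t : ℝ) : Set (E n) :=
  {u | u ∈ unitSphere n ∧ t < ⟪u, v⟫}



/-- The standing setup of Section 3 of the paper. -/
def Setup (p δ : ℝ) (P : Set (E 2)) (d : ℝ) (y z v w a b νa νb : E 2) : Prop :=
  Convex ℝ P ∧ IsCompact P ∧ (0:E 2) ∈ interior P ∧
  lpSurfMeasure p P Set.univ < ENNReal.ofReal (1/δ) ∧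
  d = Metric.diam P ∧
  y ∈ P ∧ z ∈ P ∧ ‖z - y‖ = d ∧ ‖y‖ ≤ ‖z‖ ∧
  v = d⁻¹ • (z - y) ∧ ‖w‖ = 1 ∧ ⟪v, w⟫ = 0 ∧
  a ∈ frontier P ∧ b ∈ frontier P ∧ 0 < ⟪a - b, w⟫ ∧
  ⟪a, v⟫ = d/4 ∧ ⟪b, v⟫ = d/4 ∧
  IsOuterNormalAt P νa a ∧ IsOuterNormalAt P νb b

variable {P : Set (E 2)}

lemma le_suppFn (hP : IsCompact P) {x u : E 2} (hx : x ∈ P) : ⟪x, u⟫ ≤ suppFn P u := by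
  refine le_csSup ?_ ⟨x, hx, rfl⟩
  exact (hP.image (continuous_id.inner continuous_const)).bddAbove

lemma suppFn_eq_of_normal (hP : IsCompact P) {x u : E 2} (h : IsOuterNormalAt P u x)
    (hxP : x ∈ P) : suppFn P u = ⟪x, u⟫ := by
  refine le_antisymm ?_ (le_suppFn hP hxP)
  refine csSup_le ⟨_, ⟨x, hxP, rfl⟩⟩ ?_
  rintro r ⟨y, hy, rfl⟩; exact h.2 y hy

lemma gaussMap_spec {x : E 2} (h : ∃ u, IsOuterNormalAt P u x) :
    IsOuterNormalAt P (gaussMap P x) x := by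
  rw [gaussMap, dif_pos h]; exact h.choose_spec

lemma exists_outer_normal (hconv : Convex ℝ P) {x : E 2}
    (hint : (interior P).Nonempty) (hx : x ∈ frontier P) :
    ∃ u, IsOuterNormalAt P u x := by
  have hxi : x ∉ interior P := hx.2
  obtain ⟨f, hf⟩ := geometric_hahn_banach_open_point (hconv.interior) isOpen_interior hxi
  obtain ⟨y₀, hy₀⟩ := hint
  set u₀ : E 2 := (InnerProductSpace.toDual ℝ (E 2)).symm f with hu₀def
  have hu₀app : ∀ y, ⟪y, u₀⟫ = f y := by
    intro y
    rw [real_inner_comm]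
    exact InnerProductSpace.toDual_symm_apply
  have hu₀ne : u₀ ≠ 0 := by
    intro h0
    have h1 := hf y₀ hy₀
    have h2 := hu₀app y₀
    have h3 := hu₀app x
    rw [h0] at h2 h3
    simp only [inner_zero_right] at h2 h3
    rw [← h2, ← h3] at h1
    exact lt_irrefl _ h1
  have hle : ∀ y ∈ P, f y ≤ f x := by
    intro y hy
    by_contra hgt
    push_neg at hgt
    set g := f y - f x with hg
    have hgpos : 0 < g := by simp [hg]; linarith
    set M := |f y₀ - f y| + 1 with hM
    have hMpos : 0 < M := by positivity
    set θ := min 1 (g / (2 * M)) with hθ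
    have hθpos : 0 < θ := lt_min one_pos (by positivity)
    have hθ1 : θ ≤ 1 := min_le_left _ _
    have hmem : θ • y₀ + (1 - θ) • y ∈ interior P :=
      hconv.combo_interior_closure_mem_interior hy₀ (subset_closure hy) hθpos
        (by linarith) (by ring)
    have hlt := hf _ hmem
    have hfval : f (θ • y₀ + (1 - θ) • y) = θ * f y₀ + (1 - θ) * f y := by
      simp [map_add, _root_.map_smul]
    rw [hfval] at hlt
    have hθM : θ * M ≤ g / 2 := by
      have : θ ≤ g / (2 * M) := min_le_right _ _
      calc θ * M ≤ (g / (2 * M)) * M := by nlinarith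
        _ = g / 2 := by field_simp
    have habs : f y₀ - f y ≥ -M := by
      have := abs_nonneg (f y₀ - f y)
      have := neg_abs_le (f y₀ - f y)
      simp [hM]; linarith
    nlinarith
  refine ⟨‖u₀‖⁻¹ • u₀, norm_smul_inv_norm hu₀ne, fun y hy => ?_⟩
  have h1 : (0:ℝ) ≤ ‖u₀‖⁻¹ := by positivity
  have h2 : ⟪y, u₀⟫ ≤ ⟪x, u₀⟫ := by
    rw [hu₀app, hu₀app]; exact hle y hy
  rw [real_inner_smul_right, real_inner_smul_right]
  exact mul_le_mul_of_nonneg_left h2 h1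

lemma decomp2 {v w : E 2} (hv : ‖v‖ = 1) (hw : ‖w‖ = 1) (hvw : ⟪v, w⟫ = 0) (r : E 2) :
    r = ⟪r, v⟫ • v + ⟪r, w⟫ • w := by
  have hvv : ⟪v, v⟫ = 1 := by
    rw [real_inner_self_eq_norm_sq, hv]; norm_num
  have hww : ⟪w, w⟫ = 1 := by
    rw [real_inner_self_eq_norm_sq, hw]; norm_num
  have hwv : ⟪w, v⟫ = 0 := by rw [real_inner_comm]; exact hvw
  have hli : LinearIndependent ℝ ![v, w] := by
    rw [LinearIndependent.pair_iff]
    intro s t hst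
    have h1 : ⟪s • v + t • w, v⟫ = 0 := by rw [hst]; simp
    have h2 : ⟪s • v + t • w, w⟫ = 0 := by rw [hst]; simp
    simp only [inner_add_left, real_inner_smul_left, hvv, hww, hvw, hwv] at h1 h2
    constructor <;> linarith
  have hcard : Fintype.card (Fin 2) = Module.finrank ℝ (E 2) := by
    simp [finrank_euclideanSpace_fin]
  have hspan : Submodule.span ℝ (Set.range ![v, w]) = ⊤ := by
    have hsp := (basisOfLinearIndependentOfCardEqFinrank hli hcard).span_eq
    rwa [coe_basisOfLinearIndependentOfCardEqFinrank] at hsp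
  have hr : r ∈ Submodule.span ℝ ({v, w} : Set (E 2)) := by
    have hrange : Set.range ![v, w] = {v, w} := by
      simp [Matrix.range_cons, Matrix.range_empty, Set.pair_comm]
    rw [← hrange, hspan]; trivial
  obtain ⟨s, t, hst⟩ := Submodule.mem_span_pair.1 hr
  have hsv : ⟪r, v⟫ = s := by
    rw [← hst]
    simp only [inner_add_left, real_inner_smul_left, hvv, hwv]; ring
  have htw : ⟪r, w⟫ = t := by
    rw [← hst]
    simp only [inner_add_left, real_inner_smul_left, hww, hvw]; ring
  rw [hsv, htw, hst]

lemma inner_expand {v w : E 2} (hv : ‖v‖ = 1) (hw : ‖w‖ = 1) (hvw : ⟪v, w⟫ = 0)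
    (r u : E 2) : ⟪r, u⟫ = ⟪r, v⟫ * ⟪u, v⟫ + ⟪r, w⟫ * ⟪u, w⟫ := by
  have hvv : ⟪v, v⟫ = 1 := by
    rw [real_inner_self_eq_norm_sq, hv]; norm_num
  have hww : ⟪w, w⟫ = 1 := by
    rw [real_inner_self_eq_norm_sq, hw]; norm_num
  have hwv : ⟪w, v⟫ = 0 := by rw [real_inner_comm]; exact hvw
  nth_rewrite 1 [decomp2 hv hw hvw u, decomp2 hv hw hvw r]
  simp only [inner_add_left, inner_add_right, real_inner_smul_left, real_inner_smul_right,
    hvv, hww, hvw, hwv]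
  ring

section Chunk2
open Filter Topology

variable {P : Set (E 2)}

def cornerSet (P : Set (E 2)) : Set (E 2) :=
  {x | x ∈ frontier P ∧ ∃ u u', IsOuterNormalAt P u x ∧ IsOuterNormalAt P u' x ∧ u ≠ u'}

def smoothSet (P : Set (E 2)) : Set (E 2) := frontier P \ cornerSet P

def normalCone (P : Set (E 2)) (x : E 2) : Set (E 2) :=
  {q | ∀ y ∈ P, ⟪y, q⟫ ≤ ⟪x, q⟫}

lemma cornerSet_interior_normalCone_nonempty (hconv : Convex ℝ P)
    (h0 : (0:E 2) ∈ interior P) {x : E 2} (hx : x ∈ cornerSet P) :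
    (interior (normalCone P x)).Nonempty := by
  obtain ⟨hxf, u, u', hu, hu', hne⟩ := hx
  obtain ⟨r, hr, hball⟩ := Metric.mem_nhds_iff.1 (mem_interior_iff_mem_nhds.1 h0)
  have huu : ⟪u, u⟫ = 1 := by rw [real_inner_self_eq_norm_sq, hu.1]; norm_num
  have hu'u' : ⟪u', u'⟫ = 1 := by rw [real_inner_self_eq_norm_sq, hu'.1]; norm_num
  have hune : u ≠ 0 := by intro h; rw [h] at huu; simp at huu
  have hnotneg : u' ≠ -u := by
    intro hopp
    have hmem : (r/2) • u ∈ Metric.ball (0:E 2) r := by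
      rw [Metric.mem_ball, dist_zero_right, norm_smul, hu.1, mul_one, Real.norm_eq_abs,
        abs_of_pos (by linarith : (0:ℝ) < r/2)]
      linarith
    have h1 := hu.2 ((r/2) • u) (hball hmem)
    have h4 := hu'.2 0 (hball (by simp [hr]))
    rw [hopp] at h4
    rw [real_inner_smul_left, huu, mul_one] at h1
    simp only [inner_zero_left, inner_neg_right] at h4
    linarith
  have hli : LinearIndependent ℝ ![u, u'] := by
    rw [LinearIndependent.pair_iff]
    intro s t hst
    by_cases ht : t = 0
    · subst ht
      simp only [zero_smul, add_zero] at hst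
      rcases smul_eq_zero.1 hst with h | h
      · exact ⟨h, rfl⟩
      · exact absurd h hune
    · exfalso
      have hu'eq : u' = (-(s/t)) • u := by
        have h1 : t • u' = -(s • u) := by
          rw [eq_neg_iff_add_eq_zero, add_comm]; exact hst
        have h2 := congrArg (fun q => t⁻¹ • q) h1
        simp only [smul_smul, inv_mul_cancel₀ ht, one_smul] at h2
        rw [h2, smul_neg, smul_smul, ← neg_smul]
        congr 1
        field_simp
      have hnorm : |s/t| = 1 := by
        have h3 := hu'.1
        rw [hu'eq, norm_smul, hu.1, mul_one] at h3
        simpa [Real.norm_eq_abs, abs_div] using h3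
      rcases abs_eq (by norm_num : (0:ℝ) ≤ 1) |>.1 hnorm with h | h
      · exact hnotneg (by rw [hu'eq, h, neg_smul, one_smul])
      · exact hne ((by rw [hu'eq, h, neg_neg, one_smul]) : u' = u).symm
  have hcard : Fintype.card (Fin 2) = Module.finrank ℝ (E 2) := by
    simp [finrank_euclideanSpace_fin]
  set b := basisOfLinearIndependentOfCardEqFinrank hli hcard with hbdef
  have hb : ⇑b = ![u, u'] := coe_basisOfLinearIndependentOfCardEqFinrank hli hcard
  have hb0 : b 0 = u := by rw [hb]; rfl
  have hb1 : b 1 = u' := by rw [hb]; rfl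
  set V : Set (E 2) := (b.coord 0) ⁻¹' (Ioi 0) ∩ (b.coord 1) ⁻¹' (Ioi 0) with hVdef
  have hVopen : IsOpen V := by
    refine IsOpen.inter ?_ ?_ <;>
      exact (LinearMap.continuous_of_finiteDimensional _).isOpen_preimage _ isOpen_Ioi
  have hmemV : u + u' ∈ V := by
    have e0 : b.coord 0 (u + u') = 1 := by
      nth_rewrite 1 [← hb0, ← hb1]
      simp [Module.Basis.coord_apply, Module.Basis.repr_self]
    have e1 : b.coord 1 (u + u') = 1 := by
      nth_rewrite 1 [← hb0, ← hb1]
      simp [Module.Basis.coord_apply, Module.Basis.repr_self]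
    constructor <;> simp only [mem_preimage, mem_Ioi, e0, e1] <;> norm_num
  have hVsub : V ⊆ normalCone P x := by
    rintro e ⟨he0, he1⟩
    obtain ⟨c₀, c₁, c0, c1, hrep⟩ : ∃ c₀ c₁ : ℝ, 0 ≤ c₀ ∧ 0 ≤ c₁ ∧ e = c₀ • u + c₁ • u' := by
      refine ⟨b.coord 0 e, b.coord 1 e, le_of_lt he0, le_of_lt he1, ?_⟩
      have hsum := b.sum_repr e
      rw [Fin.sum_univ_two, hb0, hb1] at hsum
      simp only [Module.Basis.coord_apply]
      exact hsum.symm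
    intro y hy
    calc ⟪y, e⟫ = c₀ * ⟪y, u⟫ + c₁ * ⟪y, u'⟫ := by
          rw [hrep]; simp only [inner_add_right, real_inner_smul_right]
      _ ≤ c₀ * ⟪x, u⟫ + c₁ * ⟪x, u'⟫ := by
          gcongr
          · exact hu.2 y hy
          · exact hu'.2 y hy
      _ = ⟪x, e⟫ := by rw [hrep]; simp only [inner_add_right, real_inner_smul_right]
  exact ⟨u + u', mem_interior.2 ⟨V, hVsub, hVopen, hmemV⟩⟩

lemma normalCone_interior_disjoint (hcomp : IsCompact P) {x x' : E 2}
    (hxf : x ∈ frontier P) (hx'f : x' ∈ frontier P) {q : E 2}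
    (hq : q ∈ interior (normalCone P x)) (hq' : q ∈ interior (normalCone P x')) :
    x = x' := by
  have hPx : x ∈ P := hcomp.isClosed.frontier_subset hxf
  have hPx' : x' ∈ P := hcomp.isClosed.frontier_subset hx'f
  obtain ⟨ε, hε, hballsub⟩ := Metric.isOpen_iff.1 (isOpen_interior.inter isOpen_interior)
    q ⟨hq, hq'⟩
  have key : ∀ e : E 2, ‖e‖ < ε → ⟪x - x', q + e⟫ = 0 := by
    intro e he
    have hmem : q + e ∈ Metric.ball q ε := by
      rw [Metric.mem_ball, dist_eq_norm, add_sub_cancel_left]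
      exact he
    obtain ⟨hm1, hm2⟩ := hballsub hmem
    have h1 : ⟪x', q + e⟫ ≤ ⟪x, q + e⟫ := (interior_subset hm1) x' hPx'
    have h2 : ⟪x, q + e⟫ ≤ ⟪x', q + e⟫ := (interior_subset hm2) x hPx
    rw [inner_sub_left]
    linarith
  have hq0 : ⟪x - x', q⟫ = 0 := by
    have := key 0 (by simpa using hε)
    simpa using this
  by_contra hne
  have hxx' : x - x' ≠ 0 := sub_ne_zero.2 hne
  set e := (ε / 2) • (‖x - x'‖⁻¹ • (x - x')) with hedef
  have hne' : ‖e‖ < ε := by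
    rw [hedef, norm_smul, norm_smul]
    simp only [Real.norm_eq_abs, norm_norm]
    rw [abs_of_pos (by linarith : (0:ℝ) < ε/2), abs_of_nonneg (by positivity : (0:ℝ) ≤ ‖x - x'‖⁻¹)]
    rw [inv_mul_cancel₀ (norm_ne_zero_iff.2 hxx')]
    linarith
  have := key e hne'
  rw [inner_add_right, hq0, zero_add, hedef, real_inner_smul_right, real_inner_smul_right,
    real_inner_self_eq_norm_sq] at this
  have hpos : 0 < ‖x - x'‖ := norm_pos_iff.2 hxx'
  have h2 : (ε / 2) * (‖x - x'‖⁻¹ * ‖x - x'‖ ^ 2) = (ε / 2) * ‖x - x'‖ := by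
    field_simp
  rw [h2] at this
  nlinarith

lemma cornerSet_countable (hconv : Convex ℝ P) (hcomp : IsCompact P)
    (h0 : (0:E 2) ∈ interior P) : (cornerSet P).Countable := by
  obtain ⟨D, hDc, hDd⟩ := TopologicalSpace.exists_countable_dense (E 2)
  have hch : ∀ x ∈ cornerSet P, ∃ q, q ∈ D ∩ interior (normalCone P x) := by
    intro x hx
    obtain ⟨q, hq⟩ := cornerSet_interior_normalCone_nonempty hconv h0 hx
    obtain ⟨q', hq'⟩ := hDd.exists_mem_open isOpen_interior ⟨q, hq⟩
    exact ⟨q', hq'⟩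
  classical
  set f : E 2 → E 2 := fun x => if hx : x ∈ cornerSet P then (hch x hx).choose else 0 with hfdef
  have hmaps : MapsTo f (cornerSet P) D := by
    intro x hx
    simp only [hfdef, dif_pos hx]
    exact ((hch x hx).choose_spec).1
  have hinj : InjOn f (cornerSet P) := by
    intro x hx x' hx' hfeq
    have h1 : f x ∈ interior (normalCone P x) := by
      simp only [hfdef, dif_pos hx]
      exact ((hch x hx).choose_spec).2
    have h2 : f x' ∈ interior (normalCone P x') := by
      simp only [hfdef, dif_pos hx']
      exact ((hch x' hx').choose_spec).2
    rw [hfeq] at h1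
    exact normalCone_interior_disjoint hcomp hx.1 hx'.1 h1 h2
  exact hmaps.countable_of_injOn hinj hDc

end Chunk2

section Chunk3
open Filter Topology

variable {P : Set (E 2)}

lemma gaussMap_mem_closedBall (P : Set (E 2)) (x : E 2) :
    gaussMap P x ∈ Metric.closedBall (0:E 2) 1 := by
  by_cases h : ∃ u, IsOuterNormalAt P u x
  · have := (gaussMap_spec h).1
    rw [Metric.mem_closedBall, dist_zero_right, this]
  · rw [gaussMap, dif_neg h]
    simp

lemma gaussMap_continuousOn (hconv : Convex ℝ P) (hcomp : IsCompact P)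
    (hint : (interior P).Nonempty) : ContinuousOn (gaussMap P) (smoothSet P) := by
  intro x hx
  have hxf : x ∈ frontier P := hx.1
  have huniq : ∀ u, IsOuterNormalAt P u x → u = gaussMap P x := by
    intro u hu
    by_contra hne
    exact hx.2 ⟨hxf, u, gaussMap P x, hu,
      gaussMap_spec (exists_outer_normal hconv hint hxf), hne⟩
  rw [ContinuousWithinAt, tendsto_iff_seq_tendsto]
  intro seq hseq
  have hseqx : Tendsto seq atTop (𝓝 x) := hseq.mono_right nhdsWithin_le_nhds
  have hseqS : ∀ᶠ n in atTop, seq n ∈ smoothSet P := hseq.eventually eventually_mem_nhdsWithin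
  apply tendsto_of_subseq_tendsto
  intro ns hns
  obtain ⟨u', hu'mem, ms, hms, hmstend⟩ :=
    (isCompact_closedBall (0:E 2) 1).tendsto_subseq
      (fun n => gaussMap_mem_closedBall P (seq (ns n)))
  have htail : Tendsto (ns ∘ ms) atTop atTop := hns.comp hms.tendsto_atTop
  have hsub : Tendsto (fun k => seq (ns (ms k))) atTop (𝓝 x) := hseqx.comp htail
  have hsubS : ∀ᶠ k in atTop, seq (ns (ms k)) ∈ smoothSet P := htail.eventually hseqS
  have hnorm : ∀ᶠ k in atTop,
      IsOuterNormalAt P (gaussMap P (seq (ns (ms k)))) (seq (ns (ms k))) :=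
    hsubS.mono fun k hk => gaussMap_spec (exists_outer_normal hconv hint hk.1)
  have hu'norm : IsOuterNormalAt P u' x := by
    constructor
    · have h1 : Tendsto (fun k => ‖gaussMap P (seq (ns (ms k)))‖) atTop (𝓝 ‖u'‖) :=
        hmstend.norm
      have h2 : ∀ᶠ k in atTop, ‖gaussMap P (seq (ns (ms k)))‖ = (1:ℝ) :=
        hnorm.mono fun k hk => hk.1
      exact tendsto_nhds_unique (h1.congr' (h2.mono fun k hk => hk)) tendsto_const_nhds
    · intro y hy
      have hL : Tendsto (fun k => ⟪y, gaussMap P (seq (ns (ms k)))⟫) atTop (𝓝 ⟪y, u'⟫) :=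
        Tendsto.inner tendsto_const_nhds hmstend
      have hR : Tendsto (fun k => ⟪seq (ns (ms k)), gaussMap P (seq (ns (ms k)))⟫) atTop
          (𝓝 ⟪x, u'⟫) := Tendsto.inner hsub hmstend
      exact le_of_tendsto_of_tendsto hL hR (hnorm.mono fun k hk => hk.2 y hy)
  refine ⟨ms, ?_⟩
  have heq : u' = gaussMap P x := huniq u' hu'norm
  rwa [heq] at hmstend

lemma gaussMap_aemeasurable (hconv : Convex ℝ P) (hcomp : IsCompact P)
    (h0 : (0:E 2) ∈ interior P) :
    AEMeasurable (gaussMap P) ((μH[1] : Measure (E 2)).restrict (frontier P)) := by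
  have hint : (interior P).Nonempty := ⟨0, h0⟩
  have hC : (cornerSet P).Countable := cornerSet_countable hconv hcomp h0
  have hCsub : cornerSet P ⊆ frontier P := fun x hx => hx.1
  have hSm : MeasurableSet (smoothSet P) :=
    (isClosed_frontier.measurableSet).diff hC.measurableSet
  have hfr : frontier P = smoothSet P ∪ cornerSet P := by
    rw [smoothSet, diff_union_of_subset hCsub]
  rw [hfr, aemeasurable_union_iff]
  constructor
  · exact (gaussMap_continuousOn hconv hcomp hint).aemeasurable hSm
  · have hzero : (μH[1] : Measure (E 2)) (cornerSet P) = 0 := by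
      have hdim : dimH (cornerSet P) < (1 : ℝ≥0) := by
        rw [dimH_countable hC]
        norm_num
      have := hausdorffMeasure_of_dimH_lt hdim
      simpa using this
    rw [Measure.restrict_eq_zero.2 hzero]
    exact aemeasurable_zero_measure

end Chunk3

section Chunk4
open Filter Topology

variable {P : Set (E 2)}

lemma exists_level_point
    (hconv : Convex ℝ P) (hcomp : IsCompact P) (h0 : (0:E 2) ∈ interior P)
    {v w a b z νa : E 2} {d t h : ℝ}
    (hv : ‖v‖ = 1) (hw : ‖w‖ = 1) (hvw : ⟪v, w⟫ = 0)
    (hzP : z ∈ P) (hz1 : d/2 ≤ ⟪z, v⟫)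
    (haP : a ∈ P) (hbP : b ∈ P) (habw : 0 < ⟪a - b, w⟫)
    (hav : ⟪a, v⟫ = d/4) (hbv : ⟪b, v⟫ = d/4)
    (hνa : IsOuterNormalAt P νa a)
    (hh : h = ⟪a, νa⟫) (hhpos : 0 < h) (hd : 0 < d)
    (ht : t ∈ Ioo (d/4) (d/2)) :
    ∃ x, x ∈ frontier P ∧ ⟪x, v⟫ = t ∧ min h (d/4) ≤ suppFn P (gaussMap P x) := by
  obtain ⟨ht1, ht2⟩ := ht
  have h0P : (0:E 2) ∈ P := interior_subset h0
  have hint : (interior P).Nonempty := ⟨0, h0⟩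
  have htpos : 0 < t := lt_trans (by linarith) ht1
  have hz1pos : 0 < ⟪z, v⟫ := lt_of_lt_of_le (by linarith) hz1
  have hwv : ⟪w, v⟫ = 0 := by rw [real_inner_comm]; exact hvw
  -- interior point at level t
  set lam := t / ⟪z, v⟫ with hlam
  have hlam0 : 0 < lam := div_pos htpos hz1pos
  have hlam1 : lam < 1 := (div_lt_one hz1pos).2 (lt_of_lt_of_le ht2 hz1)
  set pt := lam • z with hptdef
  have hptint : pt ∈ interior P := by
    have hcombo := hconv.combo_interior_closure_mem_interior h0 (subset_closure hzP)
      (a := 1 - lam) (b := lam) (by linarith) (le_of_lt hlam0) (by ring)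
    simpa using hcombo
  have hptv : ⟪pt, v⟫ = t := by
    rw [hptdef, real_inner_smul_left, hlam, div_mul_cancel₀ _ hz1pos.ne']
  -- slice and its top point
  set K := P ∩ {x : E 2 | ⟪x, v⟫ = t} with hK
  have hKco : IsCompact K :=
    hcomp.inter_right (isClosed_eq (continuous_id.inner continuous_const) continuous_const)
  have hKne : K.Nonempty := ⟨pt, interior_subset hptint, hptv⟩
  have hcont : ContinuousOn (fun x : E 2 => ⟪x, w⟫) K :=
    (continuous_id.inner continuous_const).continuousOn
  obtain ⟨xt, hxtK, hxtmax⟩ := hKco.exists_isMaxOn hKne hcont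
  have hxtP : xt ∈ P := hxtK.1
  have hxtv : ⟪xt, v⟫ = t := hxtK.2
  have hxtfr : xt ∈ frontier P := by
    refine ⟨subset_closure hxtP, fun hxtint => ?_⟩
    obtain ⟨ε, hε, hball⟩ := Metric.mem_nhds_iff.1 (mem_interior_iff_mem_nhds.1 hxtint)
    have hqmem : xt + (ε/2) • w ∈ Metric.ball xt ε := by
      rw [Metric.mem_ball, dist_eq_norm, add_sub_cancel_left, norm_smul, hw, mul_one,
        Real.norm_eq_abs, abs_of_pos (by linarith)]
      linarith
    have hqK : xt + (ε/2) • w ∈ K := by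
      refine ⟨hball hqmem, ?_⟩
      show ⟪xt + (ε/2) • w, v⟫ = t
      rw [inner_add_left, real_inner_smul_left, hwv, hxtv]; ring
    have hmax := hxtmax hqK
    simp only [id_eq, mem_setOf_eq, inner_add_left, real_inner_smul_left] at hmax
    have hww1 : ⟪w, w⟫ = (1:ℝ) := by rw [real_inner_self_eq_norm_sq, hw]; norm_num
    rw [hww1] at hmax
    linarith
  set u := gaussMap P xt with hudef
  have hu : IsOuterNormalAt P u xt := gaussMap_spec (exists_outer_normal hconv hint hxtfr)
  have hsupp : suppFn P u = ⟪xt, u⟫ := suppFn_eq_of_normal hcomp hu hxtP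
  -- the top point is above the interior point
  have hptw : ⟪pt, w⟫ < ⟪xt, w⟫ := by
    obtain ⟨ε, hε, hball⟩ := Metric.mem_nhds_iff.1 (mem_interior_iff_mem_nhds.1 hptint)
    have hqmem : pt + (ε/2) • w ∈ Metric.ball pt ε := by
      rw [Metric.mem_ball, dist_eq_norm, add_sub_cancel_left, norm_smul, hw, mul_one,
        Real.norm_eq_abs, abs_of_pos (by linarith)]
      linarith
    have hqK : pt + (ε/2) • w ∈ K := by
      refine ⟨hball hqmem, ?_⟩
      show ⟪pt + (ε/2) • w, v⟫ = t
      rw [inner_add_left, hptv, real_inner_smul_left, hwv]; ring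
    have hmax := hxtmax hqK
    simp only [id_eq, mem_setOf_eq, inner_add_left, real_inner_smul_left] at hmax
    have hww1 : ⟪w, w⟫ = (1:ℝ) := by rw [real_inner_self_eq_norm_sq, hw]; norm_num
    rw [hww1] at hmax
    linarith
  have hdiff : pt - xt = (⟪pt, w⟫ - ⟪xt, w⟫) • w := by
    have hdec := decomp2 hv hw hvw (pt - xt)
    rw [inner_sub_left, inner_sub_left, hptv, hxtv] at hdec
    simpa using hdec
  have hu2 : 0 ≤ ⟪u, w⟫ := by
    have h1 : ⟪pt, u⟫ ≤ ⟪xt, u⟫ := hu.2 pt (interior_subset hptint)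
    have h2 : ⟪pt - xt, u⟫ ≤ 0 := by rw [inner_sub_left]; linarith
    rw [hdiff, real_inner_smul_left] at h2
    have h3 : ⟪pt, w⟫ - ⟪xt, w⟫ < 0 := by linarith
    have h4 : 0 ≤ ⟪w, u⟫ := by
      by_contra h5
      push_neg at h5
      have h6 := mul_pos_of_neg_of_neg h3 h5
      linarith
    rw [real_inner_comm]; exact h4
  set n1 := ⟪νa, v⟫ with hn1def
  set n2 := ⟪νa, w⟫ with hn2def
  set u1 := ⟪u, v⟫ with hu1def
  set u2 := ⟪u, w⟫ with hu2def
  have hn2 : 0 ≤ n2 := by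
    have h1 : ⟪b - a, νa⟫ ≤ 0 := by
      rw [inner_sub_left]
      have := hνa.2 b hbP
      linarith
    have h2 : ⟪b - a, v⟫ = 0 := by rw [inner_sub_left, hav, hbv]; ring
    have h3 : ⟪b - a, w⟫ < 0 := by
      rw [inner_sub_left]
      rw [inner_sub_left] at habw
      linarith
    have h4 := inner_expand hv hw hvw (b - a) νa
    rw [h2, ← hn1def, ← hn2def] at h4
    by_contra h5
    push_neg at h5
    have h6 := mul_pos_of_neg_of_neg h3 h5
    linarith
  have huu1 : ⟪u, u⟫ = 1 := by rw [real_inner_self_eq_norm_sq, hu.1]; norm_num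
  have hnn1 : ⟪νa, νa⟫ = 1 := by rw [real_inner_self_eq_norm_sq, hνa.1]; norm_num
  have hnorm_u : u1 * u1 + u2 * u2 = 1 := by
    have hexp := inner_expand hv hw hvw u u
    rw [huu1, ← hu1def, ← hu2def] at hexp
    linarith
  have hnorm_n : n1 * n1 + n2 * n2 = 1 := by
    have hexp := inner_expand hv hw hvw νa νa
    rw [hnn1, ← hn1def, ← hn2def] at hexp
    linarith
  set α := t - d/4 with hα
  set β := ⟪xt, w⟫ - ⟪a, w⟫ with hβ
  have hαpos : 0 < α := by rw [hα]; linarith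
  have hA1 : 0 ≤ α * u1 + β * u2 := by
    have h1 : ⟪a, u⟫ ≤ ⟪xt, u⟫ := hu.2 a haP
    have h2 := inner_expand hv hw hvw (xt - a) u
    rw [inner_sub_left, inner_sub_left, inner_sub_left, hxtv, hav,
      ← hu1def, ← hu2def] at h2
    rw [hα, hβ]
    linarith
  have hA2 : α * n1 + β * n2 ≤ 0 := by
    have h1 : ⟪xt, νa⟫ ≤ ⟪a, νa⟫ := hνa.2 xt hxtP
    have h2 := inner_expand hv hw hvw (xt - a) νa
    rw [inner_sub_left, inner_sub_left, inner_sub_left, hxtv, hav,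
      ← hn1def, ← hn2def] at h2
    rw [hα, hβ]
    linarith
  have hdet : 0 ≤ u1 * n2 - u2 * n1 := by
    have h5 : 0 ≤ (α * u1 + β * u2) * n2 := mul_nonneg hA1 hn2
    have h6 : (α * n1 + β * n2) * u2 ≤ 0 := mul_nonpos_of_nonpos_of_nonneg hA2 hu2
    have h7 : 0 ≤ α * (u1 * n2 - u2 * n1) := by linarith [h5, h6]
    by_contra h8
    push_neg at h8
    have h9 := mul_neg_of_pos_of_neg hαpos h8
    linarith
  by_cases hn2z : n2 = 0
  · -- νa = ± v
    have hn1sq : n1 * n1 = 1 := by rw [hn2z] at hnorm_n; linarith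
    have hhval : h = (d/4) * n1 := by
      rw [hh, inner_expand hv hw hvw a νa, hav, ← hn1def, ← hn2def, hn2z]; ring
    rcases mul_self_eq_one_iff.1 hn1sq with hn1 | hn1
    · -- n1 = 1, so h = d/4 and u = v
      have hu2le : u2 ≤ 0 := by
        rw [hn2z, hn1] at hdet
        linarith
      have hu2z : u2 = 0 := le_antisymm hu2le hu2
      have hu1sq : u1 * u1 = 1 := by rw [hu2z] at hnorm_u; linarith
      rcases mul_self_eq_one_iff.1 hu1sq with hu1 | hu1
      · refine ⟨xt, hxtfr, hxtv, ?_⟩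
        rw [hsupp, inner_expand hv hw hvw xt u, hxtv, ← hu1def, ← hu2def, hu1, hu2z]
        have : min h (d/4) ≤ d/4 := min_le_right _ _
        linarith
      · exfalso
        have h1 : ⟪(0:E 2), u⟫ ≤ ⟪xt, u⟫ := hu.2 0 h0P
        rw [inner_zero_left, inner_expand hv hw hvw xt u, hxtv, ← hu1def, ← hu2def,
          hu1, hu2z] at h1
        linarith
    · exfalso
      rw [hn1] at hhval
      linarith
  · -- n2 > 0 : decompose u in the cone spanned by νa and v
    have hn2pos : 0 < n2 := lt_of_le_of_ne hn2 (Ne.symm hn2z)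
    set s := u2 / n2 with hs
    set t' := (u1 * n2 - u2 * n1) / n2 with ht'
    have hs0 : 0 ≤ s := div_nonneg hu2 hn2
    have ht'0 : 0 ≤ t' := div_nonneg hdet hn2
    have hdecu : u = s • νa + t' • v := by
      have h1 := decomp2 hv hw hvw u
      have h2 := decomp2 hv hw hvw νa
      rw [← hu1def, ← hu2def] at h1
      rw [← hn1def, ← hn2def] at h2
      have e1 : s * n2 = u2 := by rw [hs, div_mul_cancel₀ _ hn2pos.ne']
      have e2 : s * n1 + t' = u1 := by rw [hs, ht']; field_simp; ring
      rw [h1, h2, smul_add, smul_smul, smul_smul, ← e1, ← e2]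
      rw [add_smul, mul_smul, mul_smul]
      abel
    have hau : ⟪a, u⟫ = s * h + t' * (d/4) := by
      rw [hdecu, inner_add_right, real_inner_smul_right, real_inner_smul_right, hav, hh]
    have hst1 : 1 ≤ s + t' := by
      have h1 : ‖u‖ ≤ ‖s • νa‖ + ‖t' • v‖ := by rw [hdecu]; exact norm_add_le _ _
      rw [hu.1, norm_smul, norm_smul, hνa.1, hv, Real.norm_eq_abs, Real.norm_eq_abs,
        abs_of_nonneg hs0, abs_of_nonneg ht'0] at h1
      linarith
    refine ⟨xt, hxtfr, hxtv, ?_⟩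
    have h1 : ⟪a, u⟫ ≤ ⟪xt, u⟫ := hu.2 a haP
    rw [hsupp]
    have hmin1 : min h (d/4) ≤ h := min_le_left _ _
    have hmin2 : min h (d/4) ≤ d/4 := min_le_right _ _
    have hminpos : 0 < min h (d/4) := lt_min hhpos (by linarith)
    linarith [mul_nonneg hs0 (sub_nonneg.2 hmin1), mul_nonneg ht'0 (sub_nonneg.2 hmin2),
      mul_nonneg (sub_nonneg.2 hst1) hminpos.le]

end Chunk4

section Chunk5
open Filter Topology Bornology

variable {P : Set (E 2)}

lemma suppFn_continuous (hcomp : IsCompact P) (hne : P.Nonempty) :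
    Continuous (suppFn P) := by
  obtain ⟨R₀, hR₀⟩ := hcomp.isBounded.subset_closedBall 0
  set R := max R₀ 0 with hRdef
  have hR : P ⊆ Metric.closedBall 0 R :=
    hR₀.trans (Metric.closedBall_subset_closedBall (le_max_left _ _))
  have hR0 : 0 ≤ R := le_max_right _ _
  have key : ∀ u u' : E 2, suppFn P u ≤ suppFn P u' + R * ‖u - u'‖ := by
    intro u u'
    refine csSup_le (hne.image _) ?_
    rintro r ⟨x, hx, rfl⟩
    have h1 : ⟪x, u⟫ = ⟪x, u'⟫ + ⟪x, u - u'⟫ := by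
      rw [inner_sub_right]; ring
    have hxR : ‖x‖ ≤ R := mem_closedBall_zero_iff.1 (hR hx)
    have h2 : ⟪x, u - u'⟫ ≤ R * ‖u - u'‖ := by
      calc ⟪x, u - u'⟫ ≤ ‖x‖ * ‖u - u'‖ := real_inner_le_norm _ _
        _ ≤ R * ‖u - u'‖ := by gcongr
    have h3 : ⟪x, u'⟫ ≤ suppFn P u' := le_suppFn hcomp hx
    have hgoal : ⟪x, u⟫ ≤ suppFn P u' + R * ‖u - u'‖ := by linarith
    exact hgoal
  have hlip : LipschitzWith R.toNNReal (suppFn P) := by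
    apply LipschitzWith.of_dist_le_mul
    intro u u'
    rw [Real.dist_eq, dist_eq_norm, Real.coe_toNNReal R hR0, abs_sub_le_iff]
    have k1 := key u u'
    have k2 := key u' u
    rw [norm_sub_rev u' u] at k2
    constructor <;> linarith
  exact hlip.continuous

/-- One-sided main estimate. -/
lemma setup_bound {p δ : ℝ} (hp : p ∈ Set.Ioo (0:ℝ) 1) (hδ : δ ∈ Set.Ioo (0:ℝ) (1/2))
    {P : Set (E 2)} {d : ℝ} {y z v w a b νa νb : E 2}
    (hS : Setup p δ P d y z v w a b νa νb) (hd₀ : 4 * max 1 (1/δ) ≤ d) :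
    suppFn P νa ≤ (4/δ) ^ ((1:ℝ)/(1-p)) * d ^ (-1/(1-p)) := by
  obtain ⟨hconv, hcomp, h0, hlp, hdd, hyP, hzP, hzy, hyz, hv, hw, hvw, haF, hbF, habw,
    hav, hbv, hνa, hνb⟩ := hS
  have hδ0 : 0 < δ := hδ.1
  have hmax1 : (1:ℝ) ≤ max 1 (1/δ) := le_max_left _ _
  have hd4 : 4 ≤ d := le_trans (by linarith [hmax1]) hd₀
  have hd : 0 < d := by linarith
  have hp0 : 0 < p := hp.1
  have hp1 : p < 1 := hp.2
  have h1p : 0 < 1 - p := by linarith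
  -- v is a unit vector
  have hvnorm : ‖v‖ = 1 := by
    rw [hv, norm_smul, hzy, Real.norm_eq_abs, abs_of_pos (by positivity : (0:ℝ) < d⁻¹)]
    field_simp
  -- z is far along v
  have hzv : d/2 ≤ ⟪z, v⟫ := by
    have hzyv : ⟪z - y, v⟫ = d := by
      rw [hv, real_inner_smul_right, real_inner_self_eq_norm_sq, hzy]
      field_simp
    have hsum : 0 ≤ ⟪z + y, v⟫ := by
      rw [hv, real_inner_smul_right]
      have hexp : ⟪z + y, z - y⟫ = ‖z‖^2 - ‖y‖^2 := by
        rw [inner_add_left, inner_sub_right, inner_sub_right,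
          real_inner_self_eq_norm_sq, real_inner_self_eq_norm_sq, real_inner_comm y z]
        ring
      rw [hexp]
      have : 0 ≤ ‖z‖^2 - ‖y‖^2 := by nlinarith [norm_nonneg y, norm_nonneg z]
      positivity
    rw [inner_sub_left] at hzyv
    rw [inner_add_left] at hsum
    linarith
  have haP : a ∈ P := hcomp.isClosed.frontier_subset haF
  have hbP : b ∈ P := hcomp.isClosed.frontier_subset hbF
  have hPne : P.Nonempty := ⟨a, haP⟩
  have hsuppa : suppFn P νa = ⟪a, νa⟫ := suppFn_eq_of_normal hcomp hνa haP
  have hhpos : 0 < ⟪a, νa⟫ := by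
    obtain ⟨r, hr, hball⟩ := Metric.mem_nhds_iff.1 (mem_interior_iff_mem_nhds.1 h0)
    have hmem : (r/2) • νa ∈ P := hball (by
      rw [Metric.mem_ball, dist_zero_right, norm_smul, hνa.1, mul_one, Real.norm_eq_abs,
        abs_of_pos (by linarith)]
      linarith)
    have := hνa.2 _ hmem
    rw [real_inner_smul_left, real_inner_self_eq_norm_sq, hνa.1] at this
    nlinarith
  -- measure-theoretic chain
  set μ : Measure (E 2) := (μH[1] : Measure (E 2)).restrict (frontier P) with hμdef
  have hgauss : AEMeasurable (gaussMap P) μ := gaussMap_aemeasurable hconv hcomp h0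
  have hρ : Measurable (fun u : E 2 => ENNReal.ofReal (suppFn P u ^ (1 - p))) := by
    apply ENNReal.measurable_ofReal.comp
    exact ((Real.continuous_rpow_const h1p.le).comp (suppFn_continuous hcomp hPne)).measurable
  set g : E 2 → ℝ≥0∞ := fun x => ENNReal.ofReal (suppFn P (gaussMap P x) ^ (1 - p)) with hgdef
  have hg : AEMeasurable g μ := hρ.comp_aemeasurable hgauss
  have hHcast : (μH[((2:ℕ):ℝ) - 1] : Measure (E 2)) = (μH[1] : Measure (E 2)) := by
    norm_num
  have hintne : (interior P).Nonempty := ⟨0, h0⟩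
  have hlp_eq : lpSurfMeasure p P Set.univ = ∫⁻ x, g x ∂μ := by
    rw [lpSurfMeasure, surfMeasure]
    simp only [hintne, ite_true]
    rw [withDensity_apply _ MeasurableSet.univ, setLIntegral_univ]
    rw [hHcast]
    rw [lintegral_map' hρ.aemeasurable hgauss]
  set m := min (⟪a, νa⟫) (d/4) with hmdef
  have hm : 0 < m := lt_min hhpos (by linarith)
  have hex : ∀ t : ℝ, ∃ x : E 2, t ∈ Ioo (d/4) (d/2) →
      x ∈ frontier P ∧ ⟪x, v⟫ = t ∧ m ≤ suppFn P (gaussMap P x) := by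
    intro t
    by_cases ht : t ∈ Ioo (d/4) (d/2)
    · obtain ⟨x, h1, h2, h3⟩ := exists_level_point hconv hcomp h0 hvnorm hw hvw hzP hzv
        haP hbP habw hav hbv hνa rfl hhpos hd ht
      exact ⟨x, fun _ => ⟨h1, h2, h3⟩⟩
    · exact ⟨0, fun h => absurd h ht⟩
  choose f hf using hex
  set T := f '' (Ioo (d/4) (d/2)) with hTdef
  have hTsub : T ⊆ frontier P := by
    rintro x ⟨t, ht, rfl⟩
    exact (hf t ht).1
  have hproj : LipschitzWith 1 (fun x : E 2 => ⟪x, v⟫) := by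
    apply LipschitzWith.of_dist_le_mul
    intro x x'
    rw [Real.dist_eq, dist_eq_norm, ← inner_sub_left]
    calc |⟪x - x', v⟫| ≤ ‖x - x'‖ * ‖v‖ := abs_real_inner_le_norm _ _
      _ = ↑(1:ℝ≥0) * ‖x - x'‖ := by rw [hvnorm]; simp [mul_comm]
  have himg : Ioo (d/4) (d/2) ⊆ (fun x : E 2 => ⟪x, v⟫) '' T := by
    intro t ht
    exact ⟨f t, mem_image_of_mem f ht, (hf t ht).2.1⟩
  have hμT : ENNReal.ofReal (d/4) ≤ μ T := by
    have h1 : (μH[1] : Measure ℝ) (Ioo (d/4) (d/2)) ≤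
        (μH[1] : Measure ℝ) ((fun x : E 2 => ⟪x, v⟫) '' T) := measure_mono himg
    have h2 := hproj.hausdorffMeasure_image_le (by norm_num : (0:ℝ) ≤ 1) T
    rw [MeasureTheory.hausdorffMeasure_real, Real.volume_Ioo] at h1
    have h3 : d/2 - d/4 = d/4 := by ring
    rw [h3] at h1
    have h4 : ((1:ℝ≥0) : ℝ≥0∞) ^ (1:ℝ) * (μH[1] : Measure (E 2)) T
        = (μH[1] : Measure (E 2)) T := by simp
    rw [h4] at h2
    rw [MeasureTheory.hausdorffMeasure_real] at h2
    have h5 : μ T = (μH[1] : Measure (E 2)) (T ∩ frontier P) :=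
      Measure.restrict_apply' isClosed_frontier.measurableSet
    rw [inter_eq_self_of_subset_left hTsub] at h5
    rw [h5]
    exact le_trans h1 h2
  set c := ENNReal.ofReal (m ^ (1 - p)) with hcdef
  have hsub2 : T ⊆ {x : E 2 | c ≤ g x} := by
    rintro x ⟨t, ht, rfl⟩
    have h6 := (hf t ht).2.2
    exact ENNReal.ofReal_le_ofReal (Real.rpow_le_rpow hm.le h6 h1p.le)
  have hchain : c * ENNReal.ofReal (d/4) < ENNReal.ofReal (1/δ) :=
    calc c * ENNReal.ofReal (d/4) ≤ c * μ T := mul_le_mul_right hμT c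
      _ ≤ c * μ {x : E 2 | c ≤ g x} := mul_le_mul_right (measure_mono hsub2) c
      _ ≤ ∫⁻ x, g x ∂μ := mul_meas_ge_le_lintegral₀ hg c
      _ = lpSurfMeasure p P Set.univ := hlp_eq.symm
      _ < ENNReal.ofReal (1/δ) := hlp
  have hreal : m ^ (1 - p) * (d/4) < 1/δ := by
    rw [← ENNReal.ofReal_mul (by positivity)] at hchain
    exact (ENNReal.ofReal_lt_ofReal_iff (by positivity)).1 hchain
  -- exclude the case m = d/4
  have hlt : ⟪a, νa⟫ < d/4 := by
    by_contra hge
    push_neg at hge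
    have hmeq : m = d/4 := min_eq_right hge
    rw [hmeq] at hreal
    have hbase : (1:ℝ) ≤ d/4 := by linarith
    have h7 : d/4 ≤ (d/4) ^ ((2:ℝ) - p) := by
      have := Real.rpow_le_rpow_of_exponent_le hbase (by linarith : (1:ℝ) ≤ 2 - p)
      rwa [Real.rpow_one] at this
    have h8 : (d/4) ^ ((2:ℝ) - p) = (d/4) ^ (1 - p) * (d/4) := by
      rw [show (2:ℝ) - p = (1 - p) + 1 by ring, Real.rpow_add (by linarith), Real.rpow_one]
    have h9 : 1/δ ≤ d/4 := by
      have h10 : 1/δ ≤ max 1 (1/δ) := le_max_right _ _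
      linarith
    rw [h8] at h7
    linarith
  have hmeq : m = ⟪a, νa⟫ := min_eq_left hlt.le
  rw [hmeq] at hreal
  have hfin : ⟪a, νa⟫ ^ (1 - p) < 4 / (δ * d) := by
    rw [lt_div_iff₀ (by positivity)]
    have h14 := mul_lt_mul_of_pos_right hreal (show (0:ℝ) < 4*δ by positivity)
    have h15 : 1/δ * (4*δ) = 4 := by field_simp
    nlinarith [h14, h15]
  -- extract the bound on ⟪a, νa⟫
  set q : ℝ := 1/(1-p) with hqdef
  have hq0 : 0 < q := by positivity
  have h11 : (⟪a, νa⟫ ^ (1 - p)) ^ q ≤ (4 / (δ * d)) ^ q :=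
    Real.rpow_le_rpow (Real.rpow_nonneg hhpos.le _) hfin.le hq0.le
  have hpq1 : (1 - p) * q = 1 := by
    rw [hqdef]; field_simp
  have h12 : (⟪a, νa⟫ ^ (1 - p)) ^ q = ⟪a, νa⟫ := by
    rw [← Real.rpow_mul hhpos.le, hpq1, Real.rpow_one]
  have h13 : (4 / (δ * d)) ^ q = (4/δ) ^ q * d ^ (-q) := by
    have ha : (4:ℝ) / (δ * d) = (4/δ) * d⁻¹ := by
      field_simp
    rw [ha, Real.mul_rpow (by positivity) (by positivity), Real.inv_rpow hd.le,
      ← Real.rpow_neg hd.le]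
  have hqq : -q = -1/(1-p) := by rw [hqdef]; ring
  rw [hsuppa]
  calc ⟪a, νa⟫ = (⟪a, νa⟫ ^ (1 - p)) ^ q := h12.symm
    _ ≤ (4 / (δ * d)) ^ q := h11
    _ = (4/δ) ^ q * d ^ (-q) := h13
    _ = (4/δ) ^ ((1:ℝ)/(1-p)) * d ^ (-1/(1-p)) := by rw [hqq, hqdef]

end Chunk5

/-- Lemma 3.2 of the paper. -/
theorem stmt_10 (p δ : ℝ) (hp : p ∈ Set.Ioo (0:ℝ) 1) (hδ : δ ∈ Set.Ioo (0:ℝ) (1/2)) :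
    ∃ c₁ d₀ : ℝ, 0 < c₁ ∧ 0 < d₀ ∧
      ∀ (P : Set (E 2)) (d : ℝ) (y z v w a b νa νb : E 2),
        Setup p δ P d y z v w a b νa νb → d₀ ≤ d →
        suppFn P νa ≤ c₁ * d ^ (-1 / (1 - p)) ∧
        suppFn P νb ≤ c₁ * d ^ (-1 / (1 - p)) := by
  refine ⟨(4/δ) ^ ((1:ℝ)/(1-p)), 4 * max 1 (1/δ), ?_, ?_, ?_⟩
  · exact Real.rpow_pos_of_pos (div_pos (by norm_num) hδ.1) _
  · have h1 : (0:ℝ) < max 1 (1/δ) := lt_of_lt_of_le one_pos (le_max_left _ _)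
    linarith
  · intro P d y z v w a b νa νb hS hd₀
    constructor
    · exact setup_bound hp hδ hS hd₀
    · obtain ⟨hconv, hcomp, h0, hlp, hdd, hyP, hzP, hzy, hyz, hv, hw, hvw, haF, hbF,
        habw, hav, hbv, hνa, hνb⟩ := hS
      have hS' : Setup p δ P d y z v (-w) b a νb νa := by
        refine ⟨hconv, hcomp, h0, hlp, hdd, hyP, hzP, hzy, hyz, hv,
          by rw [norm_neg]; exact hw, by rw [inner_neg_right, hvw]; ring,
          hbF, haF, ?_, hbv, hav, hνb, hνa⟩
        rw [inner_neg_right]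
        have hswap : ⟪b - a, w⟫ = -⟪a - b, w⟫ := by
          rw [inner_sub_left, inner_sub_left]; ring
        linarith
      exact setup_bound hp hδ hS' hd₀

end
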